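/- Let n ≥ 2 and M a σ-rigid, σ-semicommutative right R-module. If U = (m₀,…,m_{n−1}) ∈ V_n(M) and A = (a₀,…,a_{n−1}) ∈ V_n(R) satisfy U·A = 0, then m_i·a_j = 0 for all i, j with i + j ≤ n − 1. -/

import Mathlib

open MulOpposite Finset

/-- Let `M` be a `σ`-rigid and `σ`-semicommutative right `R`-module. If
`U = (m₀,…,m_{n-1}) ∈ Vₙ(M)` and `A = (a₀,…,a_{n-1}) ∈ Vₙ(R)` satisfy `U·A = 0`,
then `mᵢ·aⱼ = 0` for all `i, j` with `i + j ≤ n - 1`. -/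
theorem components_vanish_of_UA_eq_zero {R M : Type*} [Ring R] [AddCommGroup M]
    [Module Rᵐᵒᵖ M] (σ : R →+* R) (n : ℕ) (hn : 2 ≤ n)
    (hrigid : ∀ (m : M) (a : R), op (σ a) • (op a • m) = 0 → op a • m = 0)
    (hsc : ∀ (m : M) (a : R), op a • m = 0 → ∀ r : R, op (σ a) • (op r • m) = 0)
    (U : ℕ → M) (A : ℕ → R)
    (hUA : ∀ k < n, ∑ ij ∈ antidiagonal k, op (A ij.2) • U ij.1 = 0) :
    ∀ i j : ℕ, i + j ≤ n - 1 → op (A j) • U i = 0 := by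
  have main : ∀ k, k ≤ n - 1 → ∀ t, t ≤ k → op (A t) • U (k - t) = 0 := by
    intro k
    induction k using Nat.strong_induction_on with
    | _ k ihk =>
      intro hk t
      induction t using Nat.strong_induction_on with
      | _ t iht =>
        intro htk
        -- the convolution sum in range form
        have hsum : ∑ j ∈ Finset.range (k + 1), op (A j) • U (k - j) = 0 := by
          have h0 := hUA k (by omega)
          have h1 : ∑ ij ∈ antidiagonal k, op (A ij.2) • U ij.1
              = ∑ ij ∈ antidiagonal k, op (A ij.1) • U ij.2 := by
            conv_lhs => rw [← Finset.HasAntidiagonal.map_swap_antidiagonal]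
            rw [Finset.sum_map]
            rfl
          rw [h1] at h0
          rwa [Finset.Nat.sum_antidiagonal_eq_sum_range_succ
            (fun i j => op (A i) • U j)] at h0
        -- drop the already-known-zero initial terms
        have hdrop : ∑ j ∈ Finset.Ico t (k + 1), op (A j) • U (k - j) = 0 := by
          have hsplit : ∑ j ∈ Finset.Ico 0 t, op (A j) • U (k - j)
              + ∑ j ∈ Finset.Ico t (k + 1), op (A j) • U (k - j)
              = ∑ j ∈ Finset.range (k + 1), op (A j) • U (k - j) := by
            rw [Finset.range_eq_Ico]
            exact Finset.sum_Ico_consecutive _ (Nat.zero_le t) (by omega)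
          have hzero : ∑ j ∈ Finset.Ico 0 t, op (A j) • U (k - j) = 0 :=
            Finset.sum_eq_zero fun j hj => by
              have hj' := Finset.mem_Ico.mp hj
              exact iht j hj'.2 (by omega)
          rw [hzero, zero_add] at hsplit
          rw [hsplit, hsum]
        rw [Finset.sum_eq_sum_Ico_succ_bot (by omega : t < k + 1)] at hdrop
        -- multiply by σ (A t)
        have hmul := congrArg (fun x => op (σ (A t)) • x) hdrop
        simp only [smul_add, Finset.smul_sum, smul_zero] at hmul
        have htail : ∑ j ∈ Finset.Ico (t + 1) (k + 1),
            op (σ (A t)) • (op (A j) • U (k - j)) = 0 :=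
          Finset.sum_eq_zero fun j hj => by
            have hj' := Finset.mem_Ico.mp hj
            have hkey : op (A t) • U ((k - j + t) - t) = 0 :=
              ihk (k - j + t) (by omega) (by omega) t (by omega)
            have : op (A t) • U (k - j) = 0 := by
              simpa using hkey
            exact hsc _ _ this (A j)
        rw [htail, add_zero] at hmul
        exact hrigid _ _ hmul
  intro i j hij
  have := main (i + j) hij j (by omega)
  simpa using this
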